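/- Let H be a real Hilbert space, E : H → ℝ Fréchet differentiable, and ξ : [0,∞) → H differentiable with ξ'(t) = −∇E(ξ(t)) for all t ≥ 0. Let γ∞ ∈ H, Z > 0, δ ∈ (0,1], θ ∈ (1/2,1), and suppose ‖∇E(η)‖ ≥ Z(E(η) − E(γ∞))^θ for all η with ‖η − γ∞‖ < δ. Assume that for all t ≥ 0 one has ‖ξ(t) − γ∞‖ < δ and E(ξ(t)) > E(γ∞), and that ξ(t) → γ∞ as t → ∞. Then for all t ≥ 0: E(ξ(t)) − E(γ∞) ≤ ( Z²(2θ−1) t + (E(ξ(0)) − E(γ∞))^{1−2θ} )^{−1/(2θ−1)} and ‖ξ(t) − γ∞‖ ≤ (1/(Z(1−θ))) ( Z²(2θ−1) t + (E(ξ(0)) − E(γ∞))^{1−2θ} )^{−(1−θ)/(2θ−1)}. -/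

import Mathlib

open Filter

/-- Algebraic convergence rate for the gradient flow when the
Łojasiewicz–Simon inequality holds with exponent `θ ∈ (1/2,1)`:
`E(ξ(t)) − E(γ∞) ≤ (Z²(2θ−1)t + (E(ξ(0))−E(γ∞))^{1−2θ})^{−1/(2θ−1)}` and
`‖ξ(t) − γ∞‖ ≤ (1/(Z(1−θ)))(Z²(2θ−1)t + (E(ξ(0))−E(γ∞))^{1−2θ})^{−(1−θ)/(2θ−1)}`. -/
theorem stmt15 {H : Type*} [NormedAddCommGroup H] [InnerProductSpace ℝ H]
    [CompleteSpace H]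
    (E : H → ℝ) (hE : Differentiable ℝ E)
    (ξ : ℝ → H) (hξ : ∀ t : ℝ, 0 ≤ t → HasDerivAt ξ (-(gradient E (ξ t))) t)
    (γlim : H) (Z δ θ : ℝ) (hZ : 0 < Z) (hδ : δ ∈ Set.Ioc (0:ℝ) 1)
    (hθ : θ ∈ Set.Ioo (1/2 : ℝ) 1)
    (hLS : ∀ η : H, ‖η - γlim‖ < δ →
      Z * (E η - E γlim) ^ θ ≤ ‖gradient E η‖)
    (hstay : ∀ t : ℝ, 0 ≤ t → ‖ξ t - γlim‖ < δ ∧ E γlim < E (ξ t))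
    (hconv : Tendsto ξ atTop (nhds γlim)) :
    ∀ t : ℝ, 0 ≤ t →
      E (ξ t) - E γlim
        ≤ (Z ^ 2 * (2 * θ - 1) * t + (E (ξ 0) - E γlim) ^ (1 - 2 * θ))
            ^ (-(1 / (2 * θ - 1)))
      ∧ ‖ξ t - γlim‖
          ≤ 1 / (Z * (1 - θ)) *
            (Z ^ 2 * (2 * θ - 1) * t + (E (ξ 0) - E γlim) ^ (1 - 2 * θ))
              ^ (-((1 - θ) / (2 * θ - 1))) := by
  obtain ⟨hθ1, hθ2⟩ := hθ
  have h2θ : (0:ℝ) < 2 * θ - 1 := by linarith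
  have h1θ : (0:ℝ) < 1 - θ := by linarith
  set f : ℝ → ℝ := fun u => E (ξ u) - E γlim with hfdef
  set g : ℝ → H := fun u => gradient E (ξ u) with hgdef
  have hfpos : ∀ s : ℝ, 0 ≤ s → 0 < f s := fun s hs => sub_pos.mpr (hstay s hs).2
  -- derivative of f
  have hfd : ∀ s : ℝ, 0 ≤ s → HasDerivAt f (-(‖g s‖ ^ 2)) s := by
    intro s hs
    have h1 := ((hE (ξ s)).hasGradientAt.hasFDerivAt.comp_hasDerivAt s (hξ s hs)).sub_const
      (E γlim)
    rw [InnerProductSpace.toDual_apply_apply] at h1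
    simpa [hfdef, hgdef, InnerProductSpace.toDual_apply_apply, inner_neg_right, real_inner_self_eq_norm_sq] using h1
  -- derivative of powers of f
  have hpow : ∀ (p : ℝ) (s : ℝ), 0 ≤ s →
      HasDerivAt (fun u => f u ^ p) (p * f s ^ (p - 1) * -(‖g s‖ ^ 2)) s := by
    intro p s hs
    exact (Real.hasDerivAt_rpow_const (Or.inl (hfpos s hs).ne')).comp s (hfd s hs)
  -- Łojasiewicz inequality along the flow
  have hLSf : ∀ s : ℝ, 0 ≤ s → Z * f s ^ θ ≤ ‖g s‖ := fun s hs =>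
    hLS (ξ s) (hstay s hs).1
  have hLSfpos : ∀ s : ℝ, 0 ≤ s → 0 < Z * f s ^ θ := fun s hs =>
    mul_pos hZ (Real.rpow_pos_of_pos (hfpos s hs) θ)
  have hLSsq : ∀ s : ℝ, 0 ≤ s → Z ^ 2 * f s ^ (2 * θ) ≤ ‖g s‖ ^ 2 := by
    intro s hs
    have h := mul_self_le_mul_self (hLSfpos s hs).le (hLSf s hs)
    calc Z ^ 2 * f s ^ (2 * θ) = (Z * f s ^ θ) * (Z * f s ^ θ) := by
          rw [show (2:ℝ) * θ = θ + θ by ring, Real.rpow_add (hfpos s hs)]; ring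
      _ ≤ ‖g s‖ * ‖g s‖ := h
      _ = ‖g s‖ ^ 2 := (sq ‖g s‖).symm
  -- the comparison function for part 1
  have hcomp : ∀ s : ℝ, 0 ≤ s →
      HasDerivAt (fun u => f u ^ (1 - 2 * θ) - Z ^ 2 * (2 * θ - 1) * u)
        ((1 - 2 * θ) * f s ^ (1 - 2 * θ - 1) * -(‖g s‖ ^ 2) - Z ^ 2 * (2 * θ - 1)) s := by
    intro s hs
    have hlin : HasDerivAt (fun u : ℝ => Z ^ 2 * (2 * θ - 1) * u) (Z ^ 2 * (2 * θ - 1)) s := by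
      simpa using (hasDerivAt_id' (x := s)).const_mul (Z ^ 2 * (2 * θ - 1))
    exact (hpow (1 - 2 * θ) s hs).sub hlin
  -- Part 1: monotonicity of u ↦ f u ^ (1-2θ) - Z²(2θ-1) u on [0,∞)
  have hmono : MonotoneOn (fun u => f u ^ (1 - 2 * θ) - Z ^ 2 * (2 * θ - 1) * u)
      (Set.Ici (0:ℝ)) := by
    apply monotoneOn_of_hasDerivWithinAt_nonneg (f' := fun s =>
      (1 - 2 * θ) * f s ^ (1 - 2 * θ - 1) * -(‖g s‖ ^ 2) - Z ^ 2 * (2 * θ - 1))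
      (convex_Ici 0)
    · exact fun s hs => ((hcomp s hs).continuousAt).continuousWithinAt
    · intro s hs
      rw [interior_Ici] at hs
      exact ((hcomp s hs.le).hasDerivWithinAt).mono interior_subset
    · intro s hs
      rw [interior_Ici] at hs
      have hf := hfpos s hs.le
      have key : Z ^ 2 ≤ f s ^ (-(2 * θ)) * ‖g s‖ ^ 2 := by
        have h1 : f s ^ (-(2 * θ)) * (Z ^ 2 * f s ^ (2 * θ)) ≤ f s ^ (-(2 * θ)) * ‖g s‖ ^ 2 :=
          mul_le_mul_of_nonneg_left (hLSsq s hs.le) (Real.rpow_nonneg hf.le _)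
        calc Z ^ 2 = f s ^ (-(2 * θ)) * (Z ^ 2 * f s ^ (2 * θ)) := by
              rw [mul_comm (Z^2), ← mul_assoc, ← Real.rpow_add hf]; simp
          _ ≤ _ := h1
      have hexp : (1 : ℝ) - 2 * θ - 1 = -(2 * θ) := by ring
      rw [hexp]
      nlinarith [Real.rpow_nonneg hf.le (-(2*θ)), sq_nonneg ‖g s‖]
  intro t ht
  set A : ℝ := Z ^ 2 * (2 * θ - 1) * t + f 0 ^ (1 - 2 * θ) with hAdef
  have hApos : 0 < A := by
    have h1 : 0 < f 0 ^ (1 - 2 * θ) := Real.rpow_pos_of_pos (hfpos 0 le_rfl) _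
    have h2 : 0 ≤ Z ^ 2 * (2 * θ - 1) * t := by positivity
    linarith
  have hAle : A ≤ f t ^ (1 - 2 * θ) := by
    have := hmono (Set.self_mem_Ici) (Set.mem_Ici.mpr ht) ht
    simp only at this
    linarith
  -- conclude part 1
  have hp : (1:ℝ) - 2 * θ ≠ 0 := by linarith
  have part1 : f t ≤ A ^ (-(1 / (2 * θ - 1))) := by
    have h1 : (f t ^ (1 - 2 * θ)) ^ ((1:ℝ) / (1 - 2 * θ)) ≤ A ^ ((1:ℝ) / (1 - 2 * θ)) :=
      Real.rpow_le_rpow_of_nonpos hApos hAle (by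
        apply div_nonpos_of_nonneg_of_nonpos zero_le_one; linarith)
    rw [← Real.rpow_mul (hfpos t ht).le, mul_one_div, div_self hp, Real.rpow_one] at h1
    have he : (1:ℝ) / (1 - 2 * θ) = -(1 / (2 * θ - 1)) := by
      field_simp
      ring
    rwa [he] at h1
  refine ⟨part1, ?_⟩
  -- Part 2
  have hZθ : 0 < Z * (1 - θ) := mul_pos hZ h1θ
  have hφbound : ∀ T : ℝ, t ≤ T → ‖ξ T - ξ t‖ ≤ f t ^ (1 - θ) / (Z * (1 - θ)) := by
    intro T hT
    have key := image_norm_le_of_norm_deriv_right_le_deriv_boundary'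
      (f := fun s => ξ s - ξ t) (a := t) (b := T)
      (f' := fun s => -(g s))
      (B := fun s => (f t ^ (1-θ) - f s ^ (1-θ)) / (Z * (1 - θ)))
      (B' := fun s => f s ^ (-θ) * ‖g s‖ ^ 2 / Z)
      (fun x hx => (((hξ x (ht.trans hx.1)).sub_const (ξ t)).continuousAt).continuousWithinAt)
      (fun x hx => ((hξ x (ht.trans hx.1)).sub_const (ξ t)).hasDerivWithinAt)
      (by simp)
      ?_ ?_ ?_
    · have h2 := key (Set.mem_Icc.mpr ⟨hT, le_rfl⟩)
      refine h2.trans ?_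
      have hTnn : 0 ≤ f T ^ ((1:ℝ)-θ) := Real.rpow_nonneg (hfpos T (ht.trans hT)).le _
      have : f t ^ ((1:ℝ)-θ) - f T ^ ((1:ℝ)-θ) ≤ f t ^ ((1:ℝ)-θ) := by linarith
      exact by gcongr
    · -- continuity of B
      intro x hx
      have hx0 : 0 ≤ x := ht.trans hx.1
      exact ((((hpow (1 - θ) x hx0).const_sub (f t ^ (1-θ))).div_const
        (Z * (1 - θ))).continuousAt).continuousWithinAt
    · -- derivative of B
      intro x hx
      have hx0 : 0 ≤ x := ht.trans hx.1
      have h1 := ((hpow (1 - θ) x hx0).const_sub (f t ^ (1-θ))).div_const (Z * (1 - θ))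
      have heq : -((1 - θ) * f x ^ (1 - θ - 1) * -(‖g x‖ ^ 2)) / (Z * (1 - θ))
          = f x ^ (-θ) * ‖g x‖ ^ 2 / Z := by
        have hexp : (1:ℝ) - θ - 1 = -θ := by ring
        rw [hexp]
        field_simp
      rw [heq] at h1
      exact h1.hasDerivWithinAt
    · -- the bound ‖f'‖ ≤ B'
      intro x hx
      have hx0 : 0 ≤ x := ht.trans hx.1
      have hgpos : 0 < ‖g x‖ := lt_of_lt_of_le (hLSfpos x hx0) (hLSf x hx0)
      have hfθ : 0 < f x ^ θ := Real.rpow_pos_of_pos (hfpos x hx0) θ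
      rw [norm_neg]
      have h1 : ‖g x‖ * (Z * f x ^ θ) ≤ ‖g x‖ * ‖g x‖ :=
        mul_le_mul_of_nonneg_left (hLSf x hx0) hgpos.le
      have hinv : f x ^ (-θ) * f x ^ θ = 1 := by
        rw [← Real.rpow_add (hfpos x hx0)]; simp
      have hfnθ : 0 < f x ^ (-θ) := Real.rpow_pos_of_pos (hfpos x hx0) _
      show ‖g x‖ ≤ f x ^ (-θ) * ‖g x‖ ^ 2 / Z
      rw [← sub_nonneg]
      have hrw : f x ^ (-θ) * ‖g x‖ ^ 2 / Z - ‖g x‖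
          = f x ^ (-θ) / Z * (‖g x‖ * ‖g x‖ - ‖g x‖ * (Z * f x ^ θ)) := by
        field_simp
        nlinarith [hinv]
      rw [hrw]
      have h4 : 0 ≤ ‖g x‖ * ‖g x‖ - ‖g x‖ * (Z * f x ^ θ) := by linarith
      positivity
  have hlim : ‖ξ t - γlim‖ ≤ f t ^ (1 - θ) / (Z * (1 - θ)) := by
    have h1 : Tendsto (fun T => ‖ξ T - ξ t‖) atTop (nhds ‖γlim - ξ t‖) :=
      ((hconv.sub tendsto_const_nhds).norm)
    rw [norm_sub_rev]
    exact le_of_tendsto h1 (eventually_atTop.mpr ⟨t, fun T hT => hφbound T hT⟩)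
  refine hlim.trans ?_
  have h2 : f t ^ ((1:ℝ) - θ) ≤ A ^ (-((1 - θ) / (2 * θ - 1))) := by
    have h3 := Real.rpow_le_rpow (hfpos t ht).le part1 h1θ.le
    rw [← Real.rpow_mul hApos.le] at h3
    calc f t ^ ((1:ℝ) - θ) ≤ A ^ (-(1 / (2 * θ - 1)) * (1 - θ)) := h3
      _ = A ^ (-((1 - θ) / (2 * θ - 1))) := by congr 1; ring
  rw [one_div, inv_mul_eq_div]
  exact by gcongr
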